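/- Let $\kappa > 0$, $0 < \alpha < 1$, and let $(\kappa^{(n)})$ satisfy $n^2\kappa^{(n)} \to \kappa$. Let $r^{(n)} = \log(1 + \kappa^{(n)}/2 + \sqrt{\kappa^{(n)} + (\kappa^{(n)})^2/4})$ and define $C^{(n)}(m) = \left(\frac{1 - e^{-2r^{(n)}}}{1 - e^{-2(m+1)r^{(n)}}}\right)^{\alpha}$. Then for every $b > 0$, $\lim_{n\to\infty} n^{\alpha}\, C^{(n)}(\lfloor bn \rfloor) = \left(\frac{2\sqrt{\kappa}}{1 - e^{-2b\sqrt{\kappa}}}\right)^{\alpha}$. -/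

import Mathlib

open Real Filter

/-- Asymptotics of the renewal hitting probability:
`nᵅ C⁽ⁿ⁾(⌊bn⌋) → (2√κ/(1-e^{-2b√κ}))^α`. -/
theorem renewal_hit_prob_asymptotics (κ α : ℝ) (hκ : 0 < κ)
    (hα0 : 0 < α) (hα1 : α < 1) (κseq r : ℕ → ℝ)
    (hpos : ∀ n, 0 < κseq n)
    (hlim : Tendsto (fun n : ℕ => (n : ℝ) ^ 2 * κseq n) atTop (nhds κ))
    (hr : ∀ n, r n = Real.log (1 + κseq n / 2 +
      Real.sqrt (κseq n + (κseq n) ^ 2 / 4)))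
    (C : ℕ → ℕ → ℝ)
    (hC : ∀ n m, C n m =
      ((1 - Real.exp (-2 * r n)) / (1 - Real.exp (-2 * ((m : ℝ) + 1) * r n))) ^ α) :
    ∀ b : ℝ, 0 < b →
      Tendsto (fun n : ℕ => (n : ℝ) ^ α * C n ⌊b * (n : ℝ)⌋₊) atTop
        (nhds ((2 * Real.sqrt κ / (1 - Real.exp (-2 * b * Real.sqrt κ))) ^ α)) := by
  intro b hb
  set u : ℕ → ℝ := fun n => κseq n / 2 + Real.sqrt (κseq n + (κseq n) ^ 2 / 4) with hu_def
  have hu_pos : ∀ n, 0 < u n := fun n =>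
    add_pos_of_nonneg_of_pos (by have := hpos n; positivity)
      (Real.sqrt_pos.mpr (by have := hpos n; positivity))
  have hr_eq : ∀ n, r n = Real.log (1 + u n) := fun n => by
    rw [hr n, hu_def]; congr 1; ring
  have hr_pos : ∀ n, 0 < r n := fun n => by
    rw [hr_eq n]; exact Real.log_pos (by linarith [hu_pos n])
  -- κseq → 0
  have hcast : Tendsto (fun n : ℕ => (n : ℝ)) atTop atTop := tendsto_natCast_atTop_atTop
  have hinv : Tendsto (fun n : ℕ => ((n : ℝ) ^ 2)⁻¹) atTop (nhds 0) :=
    tendsto_inv_atTop_zero.comp ((tendsto_pow_atTop two_ne_zero).comp hcast)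
  have hx0 : Tendsto κseq atTop (nhds 0) := by
    have h := hlim.mul hinv
    rw [mul_zero] at h
    refine Tendsto.congr' ?_ h
    filter_upwards [eventually_ge_atTop 1] with n hn
    have hn0 : ((n : ℝ) ^ 2) ≠ 0 := by
      have : (1 : ℝ) ≤ (n : ℝ) := by exact_mod_cast hn
      positivity
    field_simp
  -- u → 0
  have hu0 : Tendsto u atTop (nhds 0) := by
    have hcont : Continuous fun x : ℝ => x / 2 + Real.sqrt (x + x ^ 2 / 4) := by
      continuity
    have h := (hcont.tendsto 0).comp hx0
    simpa [Function.comp_def] using h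
  -- log(1+u)/u → 1
  have hlog : Tendsto (fun n => Real.log (1 + u n) / u n) atTop (nhds 1) := by
    have hd : HasDerivAt Real.log 1 1 := by
      simpa using Real.hasDerivAt_log one_ne_zero
    have hs := hasDerivAt_iff_tendsto_slope.mp hd
    have h1u : Tendsto (fun n => 1 + u n) atTop (nhdsWithin 1 {(1 : ℝ)}ᶜ) := by
      refine tendsto_nhdsWithin_of_tendsto_nhds_of_eventually_within _ ?_ ?_
      · simpa using tendsto_const_nhds.add hu0
      · filter_upwards with n
        simp only [Set.mem_compl_iff, Set.mem_singleton_iff]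
        intro h
        have := hu_pos n
        linarith
    have h := hs.comp h1u
    refine h.congr fun n => ?_
    simp [Function.comp, slope_def_field, Real.log_one]
  -- n * r n → √κ
  have hsq : Tendsto (fun n : ℕ => Real.sqrt ((n : ℝ) ^ 2 * κseq n)) atTop
      (nhds (Real.sqrt κ)) := (Real.continuous_sqrt.tendsto κ).comp hlim
  have hfac : Tendsto (fun n => Real.sqrt (κseq n) / 2 + Real.sqrt (1 + κseq n / 4)) atTop
      (nhds 1) := by
    have hc : Continuous fun x : ℝ => Real.sqrt x / 2 + Real.sqrt (1 + x / 4) := by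
      continuity
    have h := (hc.tendsto 0).comp hx0
    simpa [Function.comp_def] using h
  have hEu : ∀ n, Real.sqrt (κseq n) * (Real.sqrt (κseq n) / 2 + Real.sqrt (1 + κseq n / 4))
      = u n := by
    intro n
    have h1 : Real.sqrt (κseq n) * Real.sqrt (κseq n) = κseq n :=
      Real.mul_self_sqrt (hpos n).le
    have h2 : Real.sqrt (κseq n) * Real.sqrt (1 + κseq n / 4)
        = Real.sqrt (κseq n + (κseq n) ^ 2 / 4) := by
      rw [← Real.sqrt_mul (hpos n).le]
      congr 1; ring
    rw [mul_add, ← mul_div_assoc, h1, h2, hu_def]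
  have hnr : Tendsto (fun n : ℕ => (n : ℝ) * r n) atTop (nhds (Real.sqrt κ)) := by
    have hmain := hsq.mul (hlog.mul hfac)
    rw [mul_one, mul_one] at hmain
    refine hmain.congr fun n => ?_
    rw [Real.sqrt_mul (sq_nonneg _), Real.sqrt_sq (Nat.cast_nonneg n), hr_eq n]
    have hu' : u n ≠ 0 := (hu_pos n).ne'
    calc (n : ℝ) * Real.sqrt (κseq n) *
          (Real.log (1 + u n) / u n * (Real.sqrt (κseq n) / 2 + Real.sqrt (1 + κseq n / 4)))
        = (n : ℝ) * (Real.sqrt (κseq n) * (Real.sqrt (κseq n) / 2 + Real.sqrt (1 + κseq n / 4)))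
            * (Real.log (1 + u n) / u n) := by ring
      _ = (n : ℝ) * u n * (Real.log (1 + u n) / u n) := by rw [hEu n]
      _ = (n : ℝ) * Real.log (1 + u n) := by
          field_simp
  -- r → 0
  have hninv : Tendsto (fun n : ℕ => ((n : ℝ))⁻¹) atTop (nhds 0) :=
    tendsto_inv_atTop_zero.comp hcast
  have hr0 : Tendsto r atTop (nhds 0) := by
    have h := hnr.mul hninv
    rw [mul_zero] at h
    refine Tendsto.congr' ?_ h
    filter_upwards [eventually_ge_atTop 1] with n hn
    have hn0 : (n : ℝ) ≠ 0 := by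
      have : (1 : ℝ) ≤ (n : ℝ) := by exact_mod_cast hn
      positivity
    field_simp
  -- (1 - e^{-2r})/r → 2
  have hslope2 : Tendsto (fun n => (1 - Real.exp (-2 * r n)) / r n) atTop (nhds 2) := by
    have hd : HasDerivAt (fun t : ℝ => 1 - Real.exp (-2 * t)) 2 0 := by
      have h1 : HasDerivAt (fun t : ℝ => -2 * t) (-2) 0 := by
        simpa using (hasDerivAt_id (0 : ℝ)).const_mul (-2)
      have h2 := (Real.hasDerivAt_exp (-2 * 0)).comp 0 h1
      have h3 := (hasDerivAt_const (0 : ℝ) (1 : ℝ)).sub h2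
      norm_num at h3
      exact h3
    have hs := hasDerivAt_iff_tendsto_slope.mp hd
    have hrt : Tendsto r atTop (nhdsWithin 0 {(0 : ℝ)}ᶜ) :=
      tendsto_nhdsWithin_of_tendsto_nhds_of_eventually_within _ hr0
        (Eventually.of_forall fun n => by
          simp only [Set.mem_compl_iff, Set.mem_singleton_iff]
          exact (hr_pos n).ne')
    have h := hs.comp hrt
    refine h.congr fun n => ?_
    simp [Function.comp, slope_def_field]
  -- n * (1 - e^{-2 r n}) → 2√κ
  have h1 : Tendsto (fun n : ℕ => (n : ℝ) * (1 - Real.exp (-2 * r n))) atTop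
      (nhds (2 * Real.sqrt κ)) := by
    have h := hnr.mul hslope2
    rw [mul_comm] at h
    refine h.congr fun n => ?_
    have hrn := (hr_pos n).ne'
    field_simp
  -- ((⌊bn⌋+1) r n) → b√κ  and denominator limit
  have hfloor : Tendsto (fun n : ℕ => ((⌊b * (n : ℝ)⌋₊ : ℝ) + 1) / (n : ℝ)) atTop
      (nhds b) := by
    have hf := (tendsto_nat_floor_mul_div_atTop hb.le).comp hcast
    have h := hf.add hninv
    rw [add_zero] at h
    refine h.congr fun n => ?_
    rw [add_div]
    simp [Function.comp, one_div]
  have hmr : Tendsto (fun n : ℕ => ((⌊b * (n : ℝ)⌋₊ : ℝ) + 1) * r n) atTop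
      (nhds (b * Real.sqrt κ)) := by
    have h := hfloor.mul hnr
    refine Tendsto.congr' ?_ h
    filter_upwards [eventually_ge_atTop 1] with n hn
    have hn0 : (n : ℝ) ≠ 0 := by
      have : (1 : ℝ) ≤ (n : ℝ) := by exact_mod_cast hn
      positivity
    field_simp
  have h2 : Tendsto (fun n : ℕ => 1 - Real.exp (-2 * ((⌊b * (n : ℝ)⌋₊ : ℝ) + 1) * r n)) atTop
      (nhds (1 - Real.exp (-2 * b * Real.sqrt κ))) := by
    have hc : Continuous fun y : ℝ => 1 - Real.exp (-2 * y) := by continuity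
    have h := (hc.tendsto (b * Real.sqrt κ)).comp hmr
    rw [show (-2 * (b * Real.sqrt κ)) = -2 * b * Real.sqrt κ from by ring] at h
    refine h.congr fun n => ?_
    simp only [Function.comp]
    rw [show (-2 * ((⌊b * (n : ℝ)⌋₊ : ℝ) + 1) * r n) = -2 * (((⌊b * (n : ℝ)⌋₊ : ℝ) + 1) * r n) from by ring]
  have hden_pos : 0 < 1 - Real.exp (-2 * b * Real.sqrt κ) := by
    have hs : 0 < Real.sqrt κ := Real.sqrt_pos.mpr hκ
    have : Real.exp (-2 * b * Real.sqrt κ) < 1 := Real.exp_lt_one_iff.mpr (by nlinarith)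
    linarith
  -- conclusion
  have hmain := (h1.div h2 hden_pos.ne').rpow_const (Or.inr hα0.le)
  refine hmain.congr fun n => ?_
  rw [hC]
  have hA : 0 ≤ 1 - Real.exp (-2 * r n) := by
    have : Real.exp (-2 * r n) ≤ 1 :=
      (Real.exp_lt_one_iff.mpr (by nlinarith [hr_pos n])).le
    linarith
  have hB : 0 < 1 - Real.exp (-2 * ((⌊b * (n : ℝ)⌋₊ : ℝ) + 1) * r n) := by
    have hm : (0 : ℝ) < (⌊b * (n : ℝ)⌋₊ : ℝ) + 1 := by positivity
    have : Real.exp (-2 * ((⌊b * (n : ℝ)⌋₊ : ℝ) + 1) * r n) < 1 :=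
      Real.exp_lt_one_iff.mpr (by nlinarith [hr_pos n])
    linarith
  simp only [Pi.div_apply]
  rw [← Real.mul_rpow (Nat.cast_nonneg n) (div_nonneg hA hB.le), mul_div_assoc]
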